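/- arXiv:0907.2926 — 3 statements merged into one kernel-verified Lean document; each statement's English description precedes it below -/
import Mathlib

section
/- Let 0 < a < 1. The function R(x) = Γ(x)/Γ(x−a) is strictly increasing for x > a (where Γ is the Gamma function). -/
open Real Set

/-- Three-point slope inequalities for a convex function on `(0, ∞)`. -/
lemma slope_three {f : ℝ → ℝ} (hf : ConvexOn ℝ (Ioi 0) f) {p q r : ℝ}
    (hp : p ∈ Ioi (0:ℝ)) (hq : q ∈ Ioi (0:ℝ)) (hr : r ∈ Ioi (0:ℝ))
    (hpq : p < q) (hqr : q < r) :
    (f q - f p) / (q - p) ≤ (f r - f p) / (r - p) ∧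
      (f r - f p) / (r - p) ≤ (f r - f q) / (r - q) := by
  have h := hf.slope_mono_adjacent hp hr hpq hqr
  have h1 : (0:ℝ) < q - p := by linarith
  have h2 : (0:ℝ) < r - q := by linarith
  have h3 : (0:ℝ) < r - p := by linarith
  rw [div_le_div_iff₀ h1 h2] at h
  constructor
  · rw [div_le_div_iff₀ h1 h3]; nlinarith
  · rw [div_le_div_iff₀ h3 h2]; nlinarith

theorem gamma_ratio_strictMonoOn (a : ℝ) (ha0 : 0 < a) (ha1 : a < 1) :
    StrictMonoOn (fun x : ℝ => Real.Gamma x / Real.Gamma (x - a)) (Set.Ioi a) := by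
  set f : ℝ → ℝ := Real.log ∘ Real.Gamma with hf_def
  have hconv : ConvexOn ℝ (Ioi 0) f := Real.convexOn_log_Gamma
  have hfe : ∀ t : ℝ, 0 < t → f (t + 1) = f t + Real.log t := by
    intro t ht
    simp only [hf_def, Function.comp_apply]
    rw [Real.Gamma_add_one (ne_of_gt ht), Real.log_mul (ne_of_gt ht)
      (ne_of_gt (Real.Gamma_pos_of_pos ht)), add_comm]
  intro x hx y hy hxy
  simp only [mem_Ioi] at hx hy
  have hxa : (0:ℝ) < x - a := by linarith
  have hya : (0:ℝ) < y - a := by linarith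
  have hx0 : (0:ℝ) < x := by linarith
  have hy0 : (0:ℝ) < y := by linarith
  have hrw : ∀ t : ℝ, a < t →
      Real.Gamma t / Real.Gamma (t - a) = Real.exp (f t - f (t - a)) := by
    intro t ht
    have ht0 : (0:ℝ) < t := lt_trans ha0 ht
    have hta : (0:ℝ) < t - a := by linarith
    rw [Real.exp_sub]
    simp only [hf_def, Function.comp_apply]
    rw [Real.exp_log (Real.Gamma_pos_of_pos ht0), Real.exp_log (Real.Gamma_pos_of_pos hta)]
  simp only [hrw x hx, hrw y hy]
  rw [Real.exp_lt_exp]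
  by_contra hcon
  push_neg at hcon
  -- notation for midpoint
  set m : ℝ := (x + y) / 2 with hm_def
  have hxm : x < m := by rw [hm_def]; linarith
  have hmy : m < y := by rw [hm_def]; linarith
  have hm0 : (0:ℝ) < m := by linarith
  -- slope chain
  have hxax : x - a < x := by linarith
  have h12 := (slope_three hconv (mem_Ioi.mpr hxa) (mem_Ioi.mpr hx0) (mem_Ioi.mpr hy0)
    hxax hxy).1
  have h23 := (slope_three hconv (mem_Ioi.mpr hxa) (mem_Ioi.mpr hya) (mem_Ioi.mpr hy0)
    (by linarith) (by linarith)).2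
  have h1m := (slope_three hconv (mem_Ioi.mpr hxa) (mem_Ioi.mpr hx0) (mem_Ioi.mpr hm0)
    hxax hxm).1
  have hm2 := (slope_three hconv (mem_Ioi.mpr hxa) (mem_Ioi.mpr hm0) (mem_Ioi.mpr hy0)
    (by linarith) hmy).1
  -- from hcon : f y - f (y - a) ≤ f x - f (x - a), get s3 ≤ s1
  have h31 : (f y - f (y - a)) / (y - (y - a)) ≤ (f x - f (x - a)) / (x - (x - a)) := by
    rw [show y - (y - a) = a by ring, show x - (x - a) = a by ring]
    exact div_le_div_of_nonneg_right hcon ha0.le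
  -- all slopes from x - a coincide with k
  set k : ℝ := (f y - f (x - a)) / (y - (x - a)) with hk_def
  have hs1 : (f x - f (x - a)) / (x - (x - a)) = k :=
    le_antisymm h12 (h23.trans h31)
  have hsm : (f m - f (x - a)) / (m - (x - a)) = k :=
    le_antisymm hm2 ((h23.trans h31).trans h1m)
  -- clear denominators
  have hax : x - (x - a) ≠ 0 := by rw [show x - (x - a) = a by ring]; exact ne_of_gt ha0
  have haxy : y - (x - a) ≠ 0 := ne_of_gt (by linarith)
  have haxm : m - (x - a) ≠ 0 := ne_of_gt (by linarith)
  have e1 : f x - f (x - a) = k * (x - (x - a)) := (div_eq_iff hax).mp hs1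
  have e2 : f y - f (x - a) = k * (y - (x - a)) := (div_eq_iff haxy).mp rfl
  have e3 : f m - f (x - a) = k * (m - (x - a)) := (div_eq_iff haxm).mp hsm
  have fm_eq : f m = (f x + f y) / 2 := by
    rw [hm_def] at e3 ⊢
    linear_combination e3 - e1 / 2 - e2 / 2
  -- convexity at x+1, m+1, y+1 plus the functional equation
  have hcv := hconv.2 (mem_Ioi.mpr (by linarith : (0:ℝ) < x + 1))
    (mem_Ioi.mpr (by linarith : (0:ℝ) < y + 1)) (by norm_num : (0:ℝ) ≤ 1/2)
    (by norm_num : (0:ℝ) ≤ 1/2) (by norm_num : (1:ℝ)/2 + 1/2 = 1)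
  have hmid : (1/2 : ℝ) • (x + 1) + (1/2 : ℝ) • (y + 1) = m + 1 := by
    simp only [smul_eq_mul, hm_def]; ring
  rw [hmid] at hcv
  simp only [smul_eq_mul] at hcv
  rw [hfe x hx0, hfe y hy0, hfe m hm0] at hcv
  -- strict concavity of log
  have hlog := strictConcaveOn_log_Ioi.2 (mem_Ioi.mpr hx0) (mem_Ioi.mpr hy0)
    (ne_of_lt hxy) (by norm_num : (0:ℝ) < 1/2) (by norm_num : (0:ℝ) < 1/2)
    (by norm_num : (1:ℝ)/2 + 1/2 = 1)
  simp only [smul_eq_mul] at hlog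
  rw [show (1/2 : ℝ) * x + 1/2 * y = m by rw [hm_def]; ring] at hlog
  linarith
end

section
/- Let 0 < a < 1. The function S(x) = Γ(x+a)/(x^a · Γ(x)) is strictly increasing for x > 0. -/
open Real Filter Finset Topology

theorem gamma_ratio_scaled_strictMonoOn (a : ℝ) (ha0 : 0 < a) (ha1 : a < 1) :
    StrictMonoOn (fun x : ℝ => x ^ (-a) * Real.Gamma (x + a) / Real.Gamma x) (Set.Ioi (0 : ℝ)) := by
  intro x hx y hy hxy
  simp only [Set.mem_Ioi] at hx hy
  set h : ℝ → ℝ := fun u => Real.log (y + u) - Real.log (x + u) with hh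
  -- key convexity-type inequality
  have key : ∀ u : ℝ, 0 ≤ u → h (u + a) < (1 - a) * h u + a * h (u + 1) := by
    intro u hu
    set φ : ℝ → ℝ := fun c =>
      Real.log (c + (u + a)) - (1 - a) * Real.log (c + u) - a * Real.log (c + (u + 1)) with hφ
    have hanti : StrictAntiOn φ (Set.Icc x y) := by
      apply strictAntiOn_of_deriv_neg (convex_Icc x y)
      · apply ContinuousOn.sub
        apply ContinuousOn.sub
        · apply ContinuousOn.log (by fun_prop)
          intro c hc; have : 0 < c := lt_of_lt_of_le hx hc.1; positivity
        · apply ContinuousOn.mul continuousOn_const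
          apply ContinuousOn.log (by fun_prop)
          intro c hc; have : 0 < c := lt_of_lt_of_le hx hc.1; positivity
        · apply ContinuousOn.mul continuousOn_const
          apply ContinuousOn.log (by fun_prop)
          intro c hc; have : 0 < c := lt_of_lt_of_le hx hc.1; positivity
      · intro c hc
        rw [interior_Icc] at hc
        have hc0 : 0 < c := hx.trans hc.1
        have h1 : 0 < c + (u + a) := by positivity
        have h2 : 0 < c + u := by positivity
        have h3 : 0 < c + (u + 1) := by positivity
        have d1 : HasDerivAt (fun c : ℝ => Real.log (c + (u + a))) (c + (u + a))⁻¹ c := by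
          simpa [Function.comp_def] using ((Real.hasDerivAt_log h1.ne').comp c
            ((hasDerivAt_id c).add_const (u + a)))
        have d2 : HasDerivAt (fun c : ℝ => Real.log (c + u)) (c + u)⁻¹ c := by
          simpa [Function.comp_def] using ((Real.hasDerivAt_log h2.ne').comp c
            ((hasDerivAt_id c).add_const u))
        have d3 : HasDerivAt (fun c : ℝ => Real.log (c + (u + 1))) (c + (u + 1))⁻¹ c := by
          simpa [Function.comp_def] using ((Real.hasDerivAt_log h3.ne').comp c
            ((hasDerivAt_id c).add_const (u + 1)))
        have dφ : HasDerivAt φ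
            ((c + (u + a))⁻¹ - (1 - a) * (c + u)⁻¹ - a * (c + (u + 1))⁻¹) c := by
          exact (d1.sub (d2.const_mul (1 - a))).sub (d3.const_mul a)
        rw [dφ.deriv]
        have expand : (1 - a) * (c + u)⁻¹ + a * (c + (u + 1))⁻¹ - (c + (u + a))⁻¹
            = a * (1 - a) / ((c + u) * (c + (u + 1)) * (c + (u + a))) := by
          field_simp
          ring
        have hpos : 0 < a * (1 - a) / ((c + u) * (c + (u + 1)) * (c + (u + a))) := by
          have h1a : 0 < 1 - a := by linarith
          positivity
        linarith [expand ▸ hpos]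
    have := hanti (Set.left_mem_Icc.2 hxy.le) (Set.right_mem_Icc.2 hxy.le) hxy
    simp only [hφ, hh] at this ⊢
    ring_nf at this ⊢
    linarith
  -- the quantity δ
  set δ : ℝ := (h 0 - h a) - a * (h 0 - h 1) with hδ
  have hδpos : 0 < δ := by
    have := key 0 le_rfl
    simp only [zero_add] at this
    simp only [hδ]
    linarith
  -- positivity facts
  have hΓx : 0 < Real.Gamma x := Real.Gamma_pos_of_pos hx
  have hΓy : 0 < Real.Gamma y := Real.Gamma_pos_of_pos hy
  have hΓxa : 0 < Real.Gamma (x + a) := Real.Gamma_pos_of_pos (by positivity)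
  have hΓya : 0 < Real.Gamma (y + a) := Real.Gamma_pos_of_pos (by positivity)
  set A : ℕ → ℝ → ℝ := fun n t => ∏ j ∈ Finset.range (n + 1), (t + j) / (t + a + j) with hA
  have hApos : ∀ (n : ℕ) (t : ℝ), 0 < t → 0 < A n t := by
    intro n t ht
    apply Finset.prod_pos
    intro j _
    have : (0:ℝ) ≤ j := Nat.cast_nonneg j
    positivity
  -- GammaSeq ratio identity
  have hratio : ∀ (t : ℝ), 0 < t → ∀ n : ℕ, 1 ≤ n →
      Real.GammaSeq (t + a) n / Real.GammaSeq t n = (n : ℝ) ^ a * A n t := by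
    intro t ht n hn
    have hn0 : (0:ℝ) < n := by exact_mod_cast hn
    have hprod1 : (0:ℝ) < ∏ j ∈ Finset.range (n + 1), (t + j) := by
      apply Finset.prod_pos; intro j _
      have : (0:ℝ) ≤ j := Nat.cast_nonneg j; positivity
    have hprod2 : (0:ℝ) < ∏ j ∈ Finset.range (n + 1), (t + a + j) := by
      apply Finset.prod_pos; intro j _
      have : (0:ℝ) ≤ j := Nat.cast_nonneg j; positivity
    have hfact : (0:ℝ) < (Nat.factorial n : ℝ) := by exact_mod_cast Nat.factorial_pos n
    have hrp : (0:ℝ) < (n:ℝ) ^ t := Real.rpow_pos_of_pos hn0 t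
    simp only [Real.GammaSeq]
    rw [Real.rpow_add hn0]
    simp only [hA]
    rw [Finset.prod_div_distrib]
    field_simp
  -- convergence of the ratio sequence
  have hSx : (0:ℝ) < x ^ (-a) * Real.Gamma (x + a) / Real.Gamma x := by positivity
  have hSy : (0:ℝ) < y ^ (-a) * Real.Gamma (y + a) / Real.Gamma y := by positivity
  have tends : Tendsto (fun n : ℕ => (y ^ (-a) * A n y) / (x ^ (-a) * A n x)) atTop
      (𝓝 ((y ^ (-a) * Real.Gamma (y + a) / Real.Gamma y) /
          (x ^ (-a) * Real.Gamma (x + a) / Real.Gamma x))) := by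
    have hbase : Tendsto (fun n : ℕ =>
        (y ^ (-a) * (Real.GammaSeq (y + a) n / Real.GammaSeq y n)) /
        (x ^ (-a) * (Real.GammaSeq (x + a) n / Real.GammaSeq x n))) atTop
        (𝓝 ((y ^ (-a) * (Real.Gamma (y + a) / Real.Gamma y)) /
            (x ^ (-a) * (Real.Gamma (x + a) / Real.Gamma x)))) := by
      apply Tendsto.div
      · exact (tendsto_const_nhds.mul
          (((Real.GammaSeq_tendsto_Gamma (y + a))).div (Real.GammaSeq_tendsto_Gamma y) hΓy.ne'))
      · exact (tendsto_const_nhds.mul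
          (((Real.GammaSeq_tendsto_Gamma (x + a))).div (Real.GammaSeq_tendsto_Gamma x) hΓx.ne'))
      · positivity
    have heq : ∀ᶠ n : ℕ in atTop,
        (y ^ (-a) * (Real.GammaSeq (y + a) n / Real.GammaSeq y n)) /
        (x ^ (-a) * (Real.GammaSeq (x + a) n / Real.GammaSeq x n)) =
        (y ^ (-a) * A n y) / (x ^ (-a) * A n x) := by
      filter_upwards [eventually_ge_atTop 1] with n hn
      rw [hratio y hy n hn, hratio x hx n hn]
      have hn0 : (0:ℝ) < n := by exact_mod_cast hn
      have hna : (0:ℝ) < (n:ℝ) ^ a := Real.rpow_pos_of_pos hn0 a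
      have hAy := hApos n y hy
      have hAx := hApos n x hx
      have hxa : (0:ℝ) < x ^ (-a) := Real.rpow_pos_of_pos hx _
      field_simp
    have := hbase.congr' heq
    convert this using 2 <;> ring
  -- lower bound on the ratio sequence
  have hlb : ∀ n : ℕ, Real.exp (δ - a * h ((n:ℝ) + 1)) ≤ (y ^ (-a) * A n y) / (x ^ (-a) * A n x) := by
    intro n
    have hAy := hApos n y hy
    have hAx := hApos n x hx
    have hxa : (0:ℝ) < x ^ (-a) := Real.rpow_pos_of_pos hx _
    have hya : (0:ℝ) < y ^ (-a) := Real.rpow_pos_of_pos hy _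
    have hR : (0:ℝ) < (y ^ (-a) * A n y) / (x ^ (-a) * A n x) := by positivity
    rw [← Real.exp_log hR, Real.exp_le_exp]
    -- compute the log
    have hlogA : ∀ t : ℝ, 0 < t → Real.log (A n t) =
        ∑ j ∈ Finset.range (n + 1), (Real.log (t + j) - Real.log (t + a + j)) := by
      intro t ht
      rw [hA]
      rw [Real.log_prod]
      · apply Finset.sum_congr rfl
        intro j _
        have hj : (0:ℝ) ≤ j := Nat.cast_nonneg j
        rw [Real.log_div (by positivity) (by positivity)]
      · intro j _
        have hj : (0:ℝ) ≤ j := Nat.cast_nonneg j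
        positivity
    rw [Real.log_div (by positivity) (by positivity), Real.log_mul (by positivity) (by positivity),
      Real.log_mul (by positivity) (by positivity), Real.log_rpow hy, Real.log_rpow hx,
      hlogA y hy, hlogA x hx]
    -- rewrite as sum of h-terms
    have hsum : (∑ j ∈ Finset.range (n + 1), (Real.log (y + j) - Real.log (y + a + j)))
        - (∑ j ∈ Finset.range (n + 1), (Real.log (x + j) - Real.log (x + a + j)))
        = ∑ j ∈ Finset.range (n + 1), (h (j:ℝ) - h ((j:ℝ) + a)) := by
      rw [← Finset.sum_sub_distrib]
      apply Finset.sum_congr rfl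
      intro j _
      simp only [hh]
      ring_nf
    have hbound : ∑ j ∈ Finset.range (n + 1), (h (j:ℝ) - h ((j:ℝ) + a))
        ≥ δ + a * h 0 - a * h ((n:ℝ) + 1) := by
      have tele := Finset.sum_range_sub' (fun j : ℕ => a * h ((j:ℝ) + 1)) n
      simp only [Nat.cast_add, Nat.cast_one, Nat.cast_zero, zero_add] at tele
      have termwise : ∀ j ∈ Finset.range n,
          a * h ((j:ℝ) + 1) - a * h ((j:ℝ) + 1 + 1)
            ≤ h (((j + 1 : ℕ)):ℝ) - h ((((j + 1 : ℕ)):ℝ) + a) := by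
        intro j _
        have hk := (key ((j:ℝ) + 1) (by positivity)).le
        push_cast
        linarith
      have hsum2 := Finset.sum_le_sum termwise
      rw [tele] at hsum2
      calc ∑ j ∈ Finset.range (n + 1), (h (j:ℝ) - h ((j:ℝ) + a))
          = (∑ j ∈ Finset.range n, (h (((j + 1 : ℕ)):ℝ) - h ((((j + 1 : ℕ)):ℝ) + a)))
            + (h (((0:ℕ)):ℝ) - h ((((0:ℕ)):ℝ) + a)) :=
            Finset.sum_range_succ' (fun j : ℕ => h (j:ℝ) - h ((j:ℝ) + a)) n
        _ ≥ (a * h 1 - a * h ((n:ℝ) + 1)) + (h 0 - h a) := by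
            simp only [Nat.cast_zero, zero_add]
            linarith
        _ = δ + a * h 0 - a * h ((n:ℝ) + 1) := by simp only [hδ]; ring
    have h0eq : h 0 = Real.log y - Real.log x := by simp [hh]
    have h0eq' : a * h 0 = a * Real.log y - a * Real.log x := by rw [h0eq]; ring
    linarith [hsum, hbound, h0eq']
  -- limit of the lower bound
  have htail : Tendsto (fun n : ℕ => h ((n:ℝ) + 1)) atTop (𝓝 0) := by
    have h1 : Tendsto (fun n : ℕ => x + ((n:ℝ) + 1)) atTop atTop := by
      apply tendsto_atTop_add_const_left
      exact tendsto_atTop_add_const_right _ _ tendsto_natCast_atTop_atTop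
    have h2 : Tendsto (fun n : ℕ => (y - x) / (x + ((n:ℝ) + 1))) atTop (𝓝 0) :=
      Tendsto.div_atTop tendsto_const_nhds h1
    have h3 : Tendsto (fun n : ℕ => 1 + (y - x) / (x + ((n:ℝ) + 1))) atTop (𝓝 1) := by
      simpa using tendsto_const_nhds.add h2
    have h4 : Tendsto (fun n : ℕ => Real.log (1 + (y - x) / (x + ((n:ℝ) + 1)))) atTop (𝓝 0) := by
      have := (Real.continuousAt_log one_ne_zero).tendsto.comp h3
      simpa [Function.comp_def] using this
    apply h4.congr
    intro n
    have hd : (0:ℝ) < x + ((n:ℝ) + 1) := by positivity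
    have hd' : (0:ℝ) < y + ((n:ℝ) + 1) := by positivity
    simp only [hh]
    rw [← Real.log_div hd'.ne' hd.ne']
    congr 1
    field_simp
    ring
  have hexp : Tendsto (fun n : ℕ => Real.exp (δ - a * h ((n:ℝ) + 1))) atTop (𝓝 (Real.exp δ)) := by
    have : Tendsto (fun n : ℕ => δ - a * h ((n:ℝ) + 1)) atTop (𝓝 δ) := by
      simpa using tendsto_const_nhds.sub (htail.const_mul a)
    exact (Real.continuous_exp.tendsto δ).comp this
  have hfinal : Real.exp δ ≤ (y ^ (-a) * Real.Gamma (y + a) / Real.Gamma y) /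
      (x ^ (-a) * Real.Gamma (x + a) / Real.Gamma x) :=
    le_of_tendsto_of_tendsto' hexp tends hlb
  have h1lt : (1:ℝ) < Real.exp δ := by rwa [Real.one_lt_exp_iff]
  show x ^ (-a) * Real.Gamma (x + a) / Real.Gamma x < y ^ (-a) * Real.Gamma (y + a) / Real.Gamma y
  have := lt_of_lt_of_le h1lt hfinal
  rw [lt_div_iff₀ hSx, one_mul] at this
  exact this
end

section
/- For 0 < a < 1, the function y ↦ y^a (y−1)/(y−(1−a)) is strictly increasing on (1−a, ∞). -/
theorem rpow_quotient_strictMonoOn (a : ℝ) (ha0 : 0 < a) (ha1 : a < 1) :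
    StrictMonoOn (fun y : ℝ => y ^ a * (y - 1) / (y - (1 - a))) (Set.Ioi (1 - a)) := by
  have h1a : (0:ℝ) < 1 - a := by linarith
  apply strictMonoOn_of_deriv_pos (convex_Ioi (1 - a))
  · apply ContinuousOn.div
    · exact ((continuousOn_id.rpow_const (fun x hx => Or.inl (ne_of_gt (lt_trans h1a hx)))).mul
        (continuousOn_id.sub continuousOn_const))
    · exact (continuousOn_id.sub continuousOn_const)
    · intro x hx
      have : (1:ℝ) - a < x := hx
      intro h; nlinarith
  · intro x hx
    rw [interior_Ioi] at hx
    have hx1 : (1:ℝ) - a < x := hx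
    have hx0 : 0 < x := lt_trans h1a hx1
    have hne : x - (1 - a) ≠ 0 := by intro h; nlinarith
    have hrpow : HasDerivAt (fun y : ℝ => y ^ a) (a * x ^ (a - 1)) x := by
      have := Real.hasDerivAt_rpow_const (x := x) (p := a) (Or.inl (ne_of_gt hx0))
      simpa using this
    have hnum : HasDerivAt (fun y : ℝ => y ^ a * (y - 1))
        (a * x ^ (a - 1) * (x - 1) + x ^ a * 1) x := by
      have h2 : HasDerivAt (fun y : ℝ => y - 1) 1 x := by
        exact (hasDerivAt_id' x).sub_const 1
      exact hrpow.mul h2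
    have hden : HasDerivAt (fun y : ℝ => y - (1 - a)) 1 x := by
      exact (hasDerivAt_id' x).sub_const (1 - a)
    have hdiv : HasDerivAt (fun y : ℝ => y ^ a * (y - 1) / (y - (1 - a)))
        (((a * x ^ (a - 1) * (x - 1) + x ^ a * 1) * (x - (1 - a)) -
          x ^ a * (x - 1) * 1) / (x - (1 - a)) ^ 2) x := hnum.div hden hne
    rw [hdiv.deriv]
    have hxa : x ^ a = x ^ (a - 1) * x := by
      rw [← Real.rpow_add_one (ne_of_gt hx0)]; ring_nf
    have hp : 0 < x ^ (a - 1) := Real.rpow_pos_of_pos hx0 _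
    have hnum_pos : 0 < (a * x ^ (a - 1) * (x - 1) + x ^ a * 1) * (x - (1 - a)) -
        x ^ a * (x - 1) * 1 := by
      rw [hxa]
      have key : (a * x ^ (a - 1) * (x - 1) + x ^ (a - 1) * x * 1) * (x - (1 - a)) -
          x ^ (a - 1) * x * (x - 1) * 1
          = x ^ (a - 1) * (a * (x ^ 2 - (1 - a) * x + (1 - a))) := by ring
      rw [key]
      have hq : 0 < x ^ 2 - (1 - a) * x + (1 - a) := by nlinarith [sq_nonneg (2*x - (1-a))]
      positivity
    have hden_pos : 0 < (x - (1 - a)) ^ 2 := by positivity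
    exact div_pos hnum_pos hden_pos
end
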